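/- Uniqueness of the KKT fixed point: suppose R' is strictly decreasing, continuous, and positive. Then there is at most one sequence (xᵢ)_{i≥1} of nonnegative reals satisfying R'(xᵢ) = p·R'((B − ∑_{j=1}^{i} xⱼ)/w) + (1−p)·R'(x_{i+1}) for all i ≥ 1 and ∑_{i=1}^∞ xᵢ = B. -/

import Mathlib

open Finset

lemma kkt_key
    (p : ℝ) (hp : 0 < p) (hp1 : p < 1) (w : ℕ) (hw : 1 ≤ w)
    (B : ℝ)
    (R' : ℝ → ℝ) (hanti : StrictAntiOn R' (Set.Ici (0 : ℝ)))
    (x y : ℕ → ℝ)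
    (hxnn : ∀ i, 1 ≤ i → 0 ≤ x i) (hynn : ∀ i, 1 ≤ i → 0 ≤ y i)
    (hxrec : ∀ i, 1 ≤ i →
      R' (x i) = p * R' ((B - ∑ j ∈ Icc 1 i, x j) / w) + (1 - p) * R' (x (i + 1)))
    (hyrec : ∀ i, 1 ≤ i →
      R' (y i) = p * R' ((B - ∑ j ∈ Icc 1 i, y j) / w) + (1 - p) * R' (y (i + 1)))
    (hxsum : HasSum (fun i : ℕ => x (i + 1)) B)
    (hysum : HasSum (fun i : ℕ => y (i + 1)) B)
    (k : ℕ) (hk : 1 ≤ k)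
    (hprev : ∀ j, 1 ≤ j → j < k → x j = y j)
    (hlt : y k < x k) : False := by
  have hw' : (0 : ℝ) < (w : ℝ) := by exact_mod_cast hw
  have hxle : ∀ n, ∑ j ∈ Icc 1 n, x j ≤ B := by
    intro n
    have h1 : ∑ j ∈ Icc 1 n, x j = ∑ j ∈ Finset.range n, x (j + 1) := by
      induction n with
      | zero => simp
      | succ m ihm =>
        rw [Finset.sum_Icc_succ_top (by omega : 1 ≤ m + 1), Finset.sum_range_succ, ihm]
    rw [h1]
    exact sum_le_hasSum (Finset.range n) (fun i _ => hxnn (i + 1) (by omega)) hxsum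
  have hyle : ∀ n, ∑ j ∈ Icc 1 n, y j ≤ B := by
    intro n
    have h1 : ∑ j ∈ Icc 1 n, y j = ∑ j ∈ Finset.range n, y (j + 1) := by
      induction n with
      | zero => simp
      | succ m ihm =>
        rw [Finset.sum_Icc_succ_top (by omega : 1 ≤ m + 1), Finset.sum_range_succ, ihm]
    rw [h1]
    exact sum_le_hasSum (Finset.range n) (fun i _ => hynn (i + 1) (by omega)) hysum
  -- the cascade step
  have step : ∀ j, 1 ≤ j → y j < x j →
      (∑ i ∈ Icc 1 j, y i < ∑ i ∈ Icc 1 j, x i) → y (j + 1) < x (j + 1) := by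
    intro j hj hxy hS
    have hyj : (0:ℝ) ≤ y j := hynn j hj
    have hxj : (0:ℝ) ≤ x j := hxnn j hj
    have h1 : R' (x j) < R' (y j) :=
      hanti (Set.mem_Ici.2 hyj) (Set.mem_Ici.2 hxj) hxy
    have haX : (0:ℝ) ≤ (B - ∑ i ∈ Icc 1 j, x i) / w :=
      div_nonneg (sub_nonneg.2 (hxle j)) hw'.le
    have haY : (0:ℝ) ≤ (B - ∑ i ∈ Icc 1 j, y i) / w :=
      div_nonneg (sub_nonneg.2 (hyle j)) hw'.le
    have hXY : (B - ∑ i ∈ Icc 1 j, x i) / w < (B - ∑ i ∈ Icc 1 j, y i) / w := by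
      apply div_lt_div_of_pos_right ?_ hw'
      linarith
    have h2 : R' ((B - ∑ i ∈ Icc 1 j, y i) / w) < R' ((B - ∑ i ∈ Icc 1 j, x i) / w) :=
      hanti (Set.mem_Ici.2 haX) (Set.mem_Ici.2 haY) hXY
    have h2' : p * R' ((B - ∑ i ∈ Icc 1 j, y i) / w) < p * R' ((B - ∑ i ∈ Icc 1 j, x i) / w) :=
      mul_lt_mul_of_pos_left h2 hp
    have hrx := hxrec j hj
    have hry := hyrec j hj
    have h3 : (1 - p) * R' (x (j + 1)) < (1 - p) * R' (y (j + 1)) := by linarith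
    have h4 : R' (x (j + 1)) < R' (y (j + 1)) :=
      (mul_lt_mul_iff_right₀ (by linarith)).1 h3
    exact (hanti.lt_iff_gt (Set.mem_Ici.2 (hxnn (j+1) (by omega)))
      (Set.mem_Ici.2 (hynn (j+1) (by omega)))).1 h4
  have hSk : ∑ i ∈ Icc 1 k, y i < ∑ i ∈ Icc 1 k, x i := by
    obtain ⟨m, rfl⟩ : ∃ m, k = m + 1 := ⟨k - 1, by omega⟩
    rw [Finset.sum_Icc_succ_top (by omega : 1 ≤ m + 1),
        Finset.sum_Icc_succ_top (by omega : 1 ≤ m + 1)]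
    have heq : ∑ i ∈ Icc 1 m, x i = ∑ i ∈ Icc 1 m, y i :=
      Finset.sum_congr rfl (fun i hi => by
        have := Finset.mem_Icc.1 hi
        exact hprev i this.1 (by omega))
    linarith
  have hall : ∀ j, k ≤ j → y j < x j ∧ ∑ i ∈ Icc 1 j, y i < ∑ i ∈ Icc 1 j, x i := by
    intro j hj
    induction j with
    | zero => omega
    | succ n ihn =>
      rcases eq_or_lt_of_le hj with h | h
      · exact h ▸ ⟨hlt, hSk⟩
      · have hkn : k ≤ n := by omega
        obtain ⟨h1, h2⟩ := ihn hkn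
        have hn1 : 1 ≤ n := le_trans hk hkn
        have h3 := step n hn1 h1 h2
        refine ⟨h3, ?_⟩
        rw [Finset.sum_Icc_succ_top (by omega : 1 ≤ n + 1),
            Finset.sum_Icc_succ_top (by omega : 1 ≤ n + 1)]
        linarith
  have hle : ∀ i, (fun i : ℕ => y (i + 1)) i ≤ (fun i : ℕ => x (i + 1)) i := by
    intro i
    rcases lt_or_ge (i + 1) k with h | h
    · exact le_of_eq (hprev (i + 1) (by omega) h).symm
    · exact (hall (i + 1) h).1.le
  have hst : (fun i : ℕ => y (i + 1)) (k - 1) < (fun i : ℕ => x (i + 1)) (k - 1) := by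
    simp only
    have hh : k - 1 + 1 = k := by omega
    rw [hh]; exact hlt
  exact absurd (hasSum_lt hle hst hysum hxsum) (lt_irrefl B)

theorem kkt_solution_unique
    (p : ℝ) (hp : 0 < p) (hp1 : p < 1) (w : ℕ) (hw : 1 ≤ w)
    (B : ℝ) (hB : 0 < B)
    (R' : ℝ → ℝ) (hanti : StrictAntiOn R' (Set.Ici (0 : ℝ)))
    (hcont : ContinuousOn R' (Set.Ici (0 : ℝ)))
    (hpos : ∀ t : ℝ, 0 ≤ t → 0 < R' t)
    (x y : ℕ → ℝ)
    (hxnn : ∀ i, 1 ≤ i → 0 ≤ x i) (hynn : ∀ i, 1 ≤ i → 0 ≤ y i)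
    (hxrec : ∀ i, 1 ≤ i →
      R' (x i) = p * R' ((B - ∑ j ∈ Icc 1 i, x j) / w) + (1 - p) * R' (x (i + 1)))
    (hyrec : ∀ i, 1 ≤ i →
      R' (y i) = p * R' ((B - ∑ j ∈ Icc 1 i, y j) / w) + (1 - p) * R' (y (i + 1)))
    (hxsum : HasSum (fun i : ℕ => x (i + 1)) B)
    (hysum : HasSum (fun i : ℕ => y (i + 1)) B) :
    ∀ i, 1 ≤ i → x i = y i := by
  have main : ∀ i, ∀ j, 1 ≤ j → j ≤ i → x j = y j := by
    intro i
    induction i with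
    | zero => intro j h1 h2; omega
    | succ n ihn =>
      intro j h1 h2
      rcases Nat.lt_or_ge j (n + 1) with h | h
      · exact ihn j h1 (by omega)
      · have hj : j = n + 1 := by omega
        subst hj
        have hprev : ∀ m, 1 ≤ m → m < n + 1 → x m = y m := fun m hm hm' =>
          ihn m hm (by omega)
        by_contra hne
        rcases lt_or_gt_of_ne hne with h' | h'
        · exact kkt_key p hp hp1 w hw B R' hanti y x hynn hxnn hyrec hxrec hysum hxsum
            (n + 1) h1 (fun m hm hm' => (hprev m hm hm').symm) h'
        · exact kkt_key p hp hp1 w hw B R' hanti x y hxnn hynn hxrec hyrec hxsum hysum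
            (n + 1) h1 hprev h'
  exact fun i hi => main i i hi le_rfl
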